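/- Let Δ be a shifted simplicial complex on ordered vertex set v_1 < v_2 < … < v_n and let t ≤ r be natural numbers. Then among all t-element faces σ of Δ, the face {v_1, …, v_t} (if it is a face) maximizes the number of r-element faces of Δ containing σ; that is, for every t-element face σ of Δ, the number of r-faces of Δ containing σ is at most the number of r-faces of Δ containing {v_1,…,v_t}. -/

import Mathlib

open Finset

/-- Swapping a vertex `i` of `σ` for a smaller vertex `j ∉ σ` does not decrease the
number of `r`-faces containing the `t`-face, in a shifted complex. -/
lemma swap_count_le {n : ℕ} (Δ : Finset (Finset (Fin n)))
    (hshift : ∀ σ ∈ Δ, ∀ i ∈ σ, ∀ j, j < i → insert j (σ.erase i) ∈ Δ)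
    (r : ℕ) (σ : Finset (Fin n)) (i j : Fin n) (hi : i ∈ σ) (hj : j ∉ σ) (hji : j < i) :
    (Δ.filter (fun F => F.card = r ∧ σ ⊆ F)).card ≤
      (Δ.filter (fun F => F.card = r ∧ insert j (σ.erase i) ⊆ F)).card := by
  apply Finset.card_le_card_of_injOn (fun F => if j ∈ F then F else insert j (F.erase i))
  · intro F hF
    simp only [mem_coe, mem_filter] at hF ⊢
    obtain ⟨hFΔ, hFr, hσF⟩ := hF
    by_cases hjF : j ∈ F
    · simp only [if_pos hjF]
      exact ⟨hFΔ, hFr, insert_subset hjF ((erase_subset_erase i hσF).trans (erase_subset ..))⟩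
    · simp only [if_neg hjF]
      have hiF : i ∈ F := hσF hi
      refine ⟨hshift F hFΔ i hiF j hji, ?_, ?_⟩
      · rw [card_insert_of_notMem (fun h => hjF (mem_of_mem_erase h)), card_erase_of_mem hiF,
          hFr]
        have : 1 ≤ r := hFr ▸ card_pos.mpr ⟨i, hiF⟩
        omega
      · exact insert_subset_insert _ (erase_subset_erase i hσF)
  · intro F₁ h₁ F₂ h₂ heq
    simp only [coe_filter, Set.mem_setOf_eq] at h₁ h₂
    have hi₁ : i ∈ F₁ := h₁.2.2 hi
    have hi₂ : i ∈ F₂ := h₂.2.2 hi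
    simp only at heq
    by_cases hj1 : j ∈ F₁ <;> by_cases hj2 : j ∈ F₂
    · simpa [hj1, hj2] using heq
    · rw [if_pos hj1, if_neg hj2] at heq
      exfalso
      have hmem : i ∈ insert j (F₂.erase i) := heq ▸ hi₁
      rcases mem_insert.mp hmem with h | h
      · exact absurd h.symm (ne_of_lt hji)
      · exact (notMem_erase i F₂) h
    · rw [if_neg hj1, if_pos hj2] at heq
      exfalso
      have hmem : i ∈ insert j (F₁.erase i) := heq.symm ▸ hi₂
      rcases mem_insert.mp hmem with h | h
      · exact absurd h.symm (ne_of_lt hji)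
      · exact (notMem_erase i F₁) h
    · rw [if_neg hj1, if_neg hj2] at heq
      have hj1' : j ∉ F₁.erase i := fun h => hj1 (mem_of_mem_erase h)
      have hj2' : j ∉ F₂.erase i := fun h => hj2 (mem_of_mem_erase h)
      have e : F₁.erase i = F₂.erase i := by
        have := congrArg (fun s => Finset.erase s j) heq
        simpa [erase_insert hj1', erase_insert hj2'] using this
      rw [← insert_erase hi₁, ← insert_erase hi₂, e]

/-- In a shifted complex, the initial `t`-set `{v_1, …, v_t}` maximizes the
number of `r`-faces containing a given `t`-face. -/
theorem shifted_initial_face_maximizes (n t r : ℕ) (ht : t ≤ r)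
    (Δ : Finset (Finset (Fin n)))
    (hdown : ∀ s ∈ Δ, ∀ s' ⊆ s, s' ∈ Δ)
    (hshift : ∀ σ ∈ Δ, ∀ i ∈ σ, ∀ j, j < i → insert j (σ.erase i) ∈ Δ)
    (σ : Finset (Fin n)) (hσ : σ ∈ Δ) (hσcard : σ.card = t) :
    (Δ.filter (fun F => F.card = r ∧ σ ⊆ F)).card ≤
      (Δ.filter (fun F =>
        F.card = r ∧ (Finset.univ.filter (fun x : Fin n => (x : ℕ) < t)) ⊆ F)).card := by
  set τ : Finset (Fin n) := Finset.univ.filter (fun x : Fin n => (x : ℕ) < t) with hτdef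
  have htn : t ≤ n := by
    calc t = σ.card := hσcard.symm
      _ ≤ (Finset.univ : Finset (Fin n)).card := card_le_card (subset_univ σ)
      _ = n := by simp
  have hτle : τ.card ≤ t := by
    have h := Finset.card_le_card_of_injOn (s := τ) (t := Finset.range t)
      (fun x : Fin n => (x : ℕ))
      (fun x hx => mem_range.mpr (mem_filter.mp hx).2)
      (fun a _ b _ h => Fin.val_injective h)
    simpa using h
  have hτge : t ≤ τ.card := by
    have h := Finset.card_le_card_of_injOn
      (s := (Finset.univ : Finset (Fin t))) (t := τ)
      (fun k : Fin t => Fin.castLE htn k)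
      (fun k _ => mem_filter.mpr ⟨mem_univ _, by simpa using k.isLt⟩)
      (fun a _ b _ h => Fin.castLE_injective htn h)
    simpa using h
  suffices H : ∀ N (ρ : Finset (Fin n)), ρ ∈ Δ → ρ.card = t → (∑ x ∈ ρ, (x : ℕ)) ≤ N →
      (Δ.filter (fun F => F.card = r ∧ ρ ⊆ F)).card ≤
        (Δ.filter (fun F => F.card = r ∧ τ ⊆ F)).card by
    exact H _ σ hσ hσcard le_rfl
  intro N
  induction N using Nat.strong_induction_on with
  | _ N ih =>
    intro ρ hρΔ hρc hsum
    by_cases hall : ∀ x ∈ ρ, (x : ℕ) < t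
    · have hsub : ρ ⊆ τ := fun x hx => mem_filter.mpr ⟨mem_univ x, hall x hx⟩
      have : ρ = τ := eq_of_subset_of_card_le hsub (by rw [hρc]; exact hτle)
      rw [this]
    · push_neg at hall
      obtain ⟨i, hiρ, hti⟩ := hall
      have ht1 : 1 ≤ t := hρc ▸ card_pos.mpr ⟨i, hiρ⟩
      have hjex : ∃ j : Fin n, (j : ℕ) < t ∧ j ∉ ρ := by
        by_contra hcon
        push_neg at hcon
        have hτsub : τ ⊆ ρ.erase i := by
          intro x hx
          have hxlt : (x : ℕ) < t := (mem_filter.mp hx).2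
          refine mem_erase.mpr ⟨Fin.ne_of_val_ne (by omega), hcon x hxlt⟩
        have := card_le_card hτsub
        rw [card_erase_of_mem hiρ, hρc] at this
        omega
      obtain ⟨j, hjt, hjρ⟩ := hjex
      have hji : j < i := by
        rw [Fin.lt_def]; omega
      have hjne : j ∉ ρ.erase i := fun h => hjρ (mem_of_mem_erase h)
      have hρ'Δ : insert j (ρ.erase i) ∈ Δ := hshift ρ hρΔ i hiρ j hji
      have hρ'c : (insert j (ρ.erase i)).card = t := by
        rw [card_insert_of_notMem hjne, card_erase_of_mem hiρ, hρc]
        omega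
      have e1 : (∑ x ∈ insert j (ρ.erase i), (x : ℕ)) = (j : ℕ) + ∑ x ∈ ρ.erase i, (x : ℕ) :=
        sum_insert hjne
      have e2 : (∑ x ∈ ρ.erase i, (x : ℕ)) + (i : ℕ) = ∑ x ∈ ρ, (x : ℕ) :=
        Finset.sum_erase_add ρ _ hiρ
      have hji' : (j : ℕ) < (i : ℕ) := hji
      calc (Δ.filter (fun F => F.card = r ∧ ρ ⊆ F)).card
          ≤ (Δ.filter (fun F => F.card = r ∧ insert j (ρ.erase i) ⊆ F)).card :=
            swap_count_le Δ hshift r ρ i j hiρ hjρ hji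
        _ ≤ (Δ.filter (fun F => F.card = r ∧ τ ⊆ F)).card :=
            ih (N - 1) (by omega) _ hρ'Δ hρ'c (by omega)
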